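/- With A as in the binomial determinant setting, for every pair 1 ≤ i < j ≤ t and every integer k with 0 ≤ k ≤ b−1, both (x_i − x_j − k)^{b−k} and (x_i − x_j + k)^{b−k} divide det A in ℚ[x_1,…,x_t]. -/

import Mathlib

/-- Generalized binomial coefficient `C(x,k) = x(x-1)⋯(x-k+1)/k!` in a commutative ℚ-algebra. -/
noncomputable def gbinom {R : Type*} [CommRing R] [Algebra ℚ R] (x : R) (k : ℕ) : R :=
  algebraMap ℚ R ((k.factorial : ℚ)⁻¹) * ∏ i ∈ Finset.range k, (x - (i : R))

/-- The `bt × bt` matrix `A`: rows indexed by `p = (p₁,p₂)` encoding `r - 1 = b·p₁ + p₂`,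
columns indexed by `(s, c)` with `1 ≤ s ≤ t`, `0 ≤ c ≤ b-1`, with entry
`C(x_s, a + c + r - 1)`. -/
noncomputable def binomMatrix (a b t : ℕ) :
    Matrix (Fin t × Fin b) (Fin t × Fin b) (MvPolynomial (Fin t) ℚ) :=
  fun p col =>
    gbinom (MvPolynomial.X col.1) (a + (col.2 : ℕ) + (b * (p.1 : ℕ) + (p.2 : ℕ)))

/-- The polynomial (or scalar) `H(x_1,…,x_t)` from the appendix. -/
noncomputable def Hfun {R : Type*} [CommRing R] (a b t : ℕ) (x : Fin t → R) : R :=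
  (∏ i : Fin t,
      ((∏ j ∈ Finset.Icc 1 (b - 1), (x i + (j : R)) ^ (b - j)) *
        (∏ j ∈ Finset.range a, (x i - (j : R)) ^ b) *
        ∏ j ∈ Finset.Icc 1 (b - 1), (x i - (a : R) + 1 - (j : R)) ^ (b - j))) *
    ∏ p ∈ Finset.univ.filter (fun p : Fin t × Fin t => p.1 < p.2),
      ∏ k ∈ Finset.Icc (-(b : ℤ) + 1) ((b : ℤ) - 1),
        (x p.1 - x p.2 + (k : R)) ^ (b - k.natAbs)

/-! ### Auxiliary lemmas -/

open Matrix Finset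

lemma descPochhammer_smeval_prod {R : Type*} [CommRing R] (x : R) (n : ℕ) :
    (descPochhammer ℤ n).smeval x = ∏ i ∈ Finset.range n, (x - (i : R)) := by
  induction n with
  | zero => simp [descPochhammer_zero]
  | succ n ih =>
    rw [descPochhammer_succ_right, Polynomial.smeval_mul, ih, Finset.prod_range_succ]
    congr 1
    simp [Polynomial.smeval_sub, Polynomial.smeval_X, Polynomial.smeval_natCast]

lemma gbinom_eq_choose {R : Type*} [CommRing R] [Algebra ℚ R] [BinomialRing R] (x : R) (n : ℕ) :
    gbinom x n = Ring.choose x n := by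
  have h := Ring.descPochhammer_eq_factorial_smul_choose x n
  rw [descPochhammer_smeval_prod] at h
  apply @nsmul_right_injective _ _ BinomialRing.toIsAddTorsionFree _ (Nat.factorial_ne_zero n)
  show n.factorial • (gbinom x n) = n.factorial • _
  rw [← h, nsmul_eq_mul, gbinom, ← mul_assoc, ← map_natCast (algebraMap ℚ R) (n.factorial),
    ← _root_.map_mul, mul_inv_cancel₀ (by exact_mod_cast Nat.factorial_ne_zero n), _root_.map_one, one_mul]

/-- Chu–Vandermonde identity for `gbinom` with one natural argument. -/
lemma gbinom_add_natCast {R : Type*} [CommRing R] [Algebra ℚ R] [BinomialRing R]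
    (z : R) (k n : ℕ) (hkn : k ≤ n) :
    gbinom (z + (k : R)) n = ∑ m ∈ Finset.range (k+1), (k.choose m : R) * gbinom z (n - m) := by
  rw [gbinom_eq_choose, add_comm, Ring.add_choose_eq n (Commute.all _ _),
    Finset.Nat.sum_antidiagonal_eq_sum_range_succ_mk]
  rw [← Finset.sum_subset
      (Finset.range_subset_range.mpr (by omega) : Finset.range (k+1) ⊆ Finset.range (n+1))]
  · apply Finset.sum_congr rfl
    intro m hm
    rw [Ring.choose_natCast, gbinom_eq_choose]
  · intro m hm hnot
    have hklt : k < m := by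
      simp only [Finset.mem_range] at hm hnot; omega
    rw [Ring.choose_natCast, Nat.choose_eq_zero_of_lt hklt, Nat.cast_zero, zero_mul]

/-- The key per-entry divisibility: the column combination vanishes at `y = z + k`. -/
lemma sub_dvd_gbinom {R : Type*} [CommRing R] [Algebra ℚ R] [BinomialRing R]
    (y z : R) (k n : ℕ) (hkn : k ≤ n) :
    (y - z - (k : R)) ∣
      (gbinom y n - ∑ m ∈ Finset.range (k+1), (k.choose m : R) * gbinom z (n - m)) := by
  set c : R := ∑ m ∈ Finset.range (k+1), (k.choose m : R) * gbinom z (n - m) with hc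
  set p : Polynomial R :=
    gbinom (Polynomial.X) n - Polynomial.C c with hp
  have heval : ∀ w : R, p.eval w = gbinom w n - c := by
    intro w
    rw [hp, Polynomial.eval_sub, Polynomial.eval_C]
    congr 1
    rw [gbinom, gbinom, Polynomial.eval_mul, Polynomial.eval_prod]
    congr 1
    · rw [Polynomial.algebraMap_apply, Polynomial.eval_C]
    · exact Finset.prod_congr rfl fun m _ => by
        rw [Polynomial.eval_sub, Polynomial.eval_X, Polynomial.eval_natCast]
  have hroot : p.IsRoot (z + (k : R)) := by
    rw [Polynomial.IsRoot, heval, gbinom_add_natCast z k n hkn, ← hc, sub_self]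
  have hdvd : (Polynomial.X - Polynomial.C (z + (k : R))) ∣ p :=
    Polynomial.dvd_iff_isRoot.mpr hroot
  have h2 := map_dvd (Polynomial.evalRingHom y) hdvd
  simp only [map_sub, Polynomial.coe_evalRingHom, Polynomial.eval_X, Polynomial.eval_C] at h2
  rw [heval] at h2
  rwa [show y - (z + (k:R)) = y - z - (k:R) by ring] at h2

/-- Factoring a common factor `f` out of the columns in `S`. -/
lemma det_factor {n : Type*} [DecidableEq n] [Fintype n] {R : Type*} [CommRing R]
    (f : R) (N : Matrix n n R) (S : Finset n) :
    ∀ (M : Matrix n n R),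
      (∀ p q, q ∈ S → M p q = f * N p q) →
      (∀ p q, q ∉ S → M p q = N p q) →
      M.det = f ^ S.card * N.det := by
  induction S using Finset.induction_on with
  | empty =>
    intro M h1 h2
    have : M = N := by ext p q; exact h2 p q (by simp)
    simp [this]
  | @insert a S' hanS ih =>
    intro M h1 h2
    set M' : Matrix n n R := M.updateCol a (fun p => N p a) with hM'
    have hMup : M = M'.updateCol a (f • fun p => N p a) := by
      ext p q
      by_cases hq : q = a
      · simp only [hq, Matrix.updateCol_apply, if_pos rfl, Pi.smul_apply, smul_eq_mul]
        exact h1 p a (mem_insert_self a S')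
      · simp [Matrix.updateCol_apply, hq, hM']
    have hM'self : M'.updateCol a (fun p => N p a) = M' := by
      ext p q
      by_cases hq : q = a <;> simp [Matrix.updateCol_apply, hq, hM']
    have h'1 : ∀ p q, q ∈ S' → M' p q = f * N p q := by
      intro p q hq
      have hqa : q ≠ a := fun h => hanS (h ▸ hq)
      rw [hM', Matrix.updateCol_ne hqa]
      exact h1 p q (mem_insert_of_mem hq)
    have h'2 : ∀ p q, q ∉ S' → M' p q = N p q := by
      intro p q hq
      by_cases hqa : q = a
      · simp [hM', hqa]
      · rw [hM', Matrix.updateCol_ne hqa]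
        exact h2 p q (by simp [hqa, hq])
    rw [hMup, det_updateCol_smul, hM'self, ih M' h'1 h'2,
      card_insert_of_notMem hanS, pow_succ]
    ring

/-- Adding to each column of `S` a linear combination of columns outside `S`
does not change the determinant. -/
lemma det_col_ops {n : Type*} [DecidableEq n] [Fintype n] {R : Type*} [CommRing R]
    (A : Matrix n n R) (s : Finset ℕ) (g : n → ℕ → R) (d : n → ℕ → n) (S : Finset n) :
    ∀ (M : Matrix n n R),
      (∀ q ∈ S, ∀ m ∈ s, d q m ∉ S) →
      (∀ p q, q ∉ S → M p q = A p q) →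
      (∀ p q, q ∈ S → M p q = A p q + ∑ m ∈ s, g q m * A p (d q m)) →
      M.det = A.det := by
  induction S using Finset.induction_on with
  | empty =>
    intro M _ hS _
    congr 1
    ext p q
    exact hS p q (by simp)
  | @insert a S' hanS ih =>
    intro M hd hS hcomb
    set M' : Matrix n n R := M.updateCol a (fun p => A p a) with hM'
    have hM'cols : ∀ p q, q ≠ a → M' p q = M p q := by
      intro p q hq; rw [hM', Matrix.updateCol_ne hq]
    have hM'a : ∀ p, M' p a = A p a := by intro p; simp [hM']
    have hdnot : ∀ m ∈ s, d a m ∉ insert a S' := hd a (mem_insert_self a S')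
    have hM'd : ∀ p, ∀ m ∈ s, M' p (d a m) = A p (d a m) := by
      intro p m hm
      rw [hM'cols p _ (fun h => hdnot m hm (by rw [h]; exact mem_insert_self a S'))]
      exact hS p _ (hdnot m hm)
    set c : n → R := fun col =>
      (if col = a then 1 else 0) + ∑ m ∈ s.filter (fun m => d a m = col), g a m with hc
    have hca : c a = 1 := by
      have he : s.filter (fun m => d a m = a) = ∅ := by
        apply Finset.filter_eq_empty_iff.mpr
        intro m hm h
        exact hdnot m hm (by rw [h]; exact mem_insert_self a S')
      simp [hc, he]
    have hsum : ∀ p, (∑ col, c col • M' p col) =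
        A p a + ∑ m ∈ s, g a m * A p (d a m) := by
      intro p
      simp only [hc, add_smul, sum_add_distrib, ite_smul, one_smul, zero_smul,
        Finset.sum_ite_eq', mem_univ, if_true]
      congr 1
      · exact hM'a p
      · calc ∑ col, (∑ m ∈ s.filter (fun m => d a m = col), g a m) • M' p col
            = ∑ col, ∑ m ∈ s.filter (fun m => d a m = col), g a m • M' p (d a m) := by
              refine Finset.sum_congr rfl fun col _ => ?_
              rw [Finset.sum_smul]
              refine Finset.sum_congr rfl fun m hm => ?_
              rw [(Finset.mem_filter.mp hm).2]
          _ = ∑ m ∈ s, g a m • M' p (d a m) :=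
              Finset.sum_fiberwise s (fun m => d a m) (fun m => g a m • M' p (d a m))
          _ = ∑ m ∈ s, g a m * A p (d a m) :=
              Finset.sum_congr rfl fun m hm => by rw [smul_eq_mul, hM'd p m hm]
    have hMup : M = M'.updateCol a (fun p => ∑ col, c col • M' p col) := by
      ext p q
      by_cases hq : q = a
      · simp only [hq, Matrix.updateCol_apply, if_pos rfl]
        rw [hsum p]
        exact hcomb p a (mem_insert_self a S')
      · rw [Matrix.updateCol_ne hq]
        exact (hM'cols p q hq).symm
    rw [hMup, det_updateCol_sum, hca, one_smul]
    refine ih M' ?_ ?_ ?_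
    · intro q hq m hm h
      exact hd q (mem_insert_of_mem hq) m hm (mem_insert_of_mem h)
    · intro p q hq
      by_cases hqa : q = a
      · rw [hqa]; exact hM'a p
      · rw [hM'cols p q hqa]
        exact hS p q (by simp [hqa, hq])
    · intro p q hq
      have hqa : q ≠ a := fun h => hanS (h ▸ hq)
      rw [hM'cols p q hqa]
      exact hcomb p q (mem_insert_of_mem hq)

/-- The main divisibility: `(x_i - x_j - k)^(b-k) ∣ det A` for `i ≠ j`, `k < b`. -/
lemma key_dvd (a b t : ℕ) (i j : Fin t) (hij : i ≠ j) (k : ℕ) (hkb : k < b) :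
    (MvPolynomial.X i - MvPolynomial.X j - (k : MvPolynomial (Fin t) ℚ)) ^ (b - k) ∣
      (binomMatrix a b t).det := by
  classical
  set R := MvPolynomial (Fin t) ℚ with hR
  set A := binomMatrix a b t with hA
  set f : R := MvPolynomial.X i - MvPolynomial.X j - (k : R) with hf
  have hsub : ∀ (c : Fin b) (m : ℕ), (c : ℕ) - m < b :=
    fun c m => lt_of_le_of_lt (Nat.sub_le _ _) c.isLt
  set d : (Fin t × Fin b) → ℕ → (Fin t × Fin b) :=
    fun q m => (j, ⟨(q.2 : ℕ) - m, hsub q.2 m⟩) with hd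
  set P : (Fin t × Fin b) → Prop := fun q => q.1 = i ∧ k ≤ (q.2 : ℕ) with hP
  set S : Finset (Fin t × Fin b) := Finset.univ.filter P with hS
  have hmemS : ∀ q, q ∈ S ↔ P q := by intro q; simp [hS]
  set M : Matrix (Fin t × Fin b) (Fin t × Fin b) R := fun p q =>
    if P q then A p q + ∑ m ∈ Finset.range (k+1), (-(k.choose m : R)) * A p (d q m)
    else A p q with hM
  -- each modified entry is divisible by f
  have hMdvd : ∀ p q, P q → f ∣ M p q := by
    intro p q hq
    obtain ⟨hq1, hq2⟩ := hq
    set n : ℕ := a + (q.2 : ℕ) + (b * (p.1 : ℕ) + (p.2 : ℕ)) with hn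
    have hkn : k ≤ n := by omega
    have hdvd := sub_dvd_gbinom (MvPolynomial.X i : R) (MvPolynomial.X j : R) k n hkn
    have hAq : A p q = gbinom (MvPolynomial.X i) n := by
      rw [hA, binomMatrix, hq1]
    have hterm : ∀ m ∈ Finset.range (k+1),
        (-(k.choose m : R)) * A p (d q m) =
          -((k.choose m : R) * gbinom (MvPolynomial.X j) (n - m)) := by
      intro m hm
      have hmk : m ≤ k := by simpa [Nat.lt_succ_iff] using hm
      have harith : a + ((q.2 : ℕ) - m) + (b * (p.1 : ℕ) + (p.2 : ℕ)) = n - m := by omega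
      rw [hA, binomMatrix]
      simp only [hd]
      rw [harith]
      ring
    have hMq : M p q = gbinom (MvPolynomial.X i) n -
        ∑ m ∈ Finset.range (k+1), (k.choose m : R) * gbinom (MvPolynomial.X j) (n - m) := by
      rw [hM]
      simp only [if_pos (⟨hq1, hq2⟩ : P q)]
      rw [hAq, Finset.sum_congr rfl hterm, Finset.sum_neg_distrib, ← sub_eq_add_neg]
      exact if_pos (⟨hq1, hq2⟩ : P q)
    rw [hMq]
    exact hdvd
  -- column operations do not change the determinant
  have hdet1 : M.det = A.det := by
    refine det_col_ops A (Finset.range (k+1)) (fun q m => -(k.choose m : R)) d S M ?_ ?_ ?_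
    · intro q hq m hm hmem
      rw [hmemS] at hmem
      exact hij (hmem.1.symm)
    · intro p q hq
      rw [hM]
      simp only [if_neg ((hmemS q).not.mp hq ∘ id)]
    · intro p q hq
      rw [hM]
      simp only [if_pos ((hmemS q).mp hq)]
  -- factor f out of the modified columns
  have hchoice : ∀ p q, P q → ∃ u : R, M p q = f * u := by
    intro p q hq
    obtain ⟨u, hu⟩ := hMdvd p q hq
    exact ⟨u, hu⟩
  set N : Matrix (Fin t × Fin b) (Fin t × Fin b) R := fun p q =>
    if h : P q then (hchoice p q h).choose else A p q with hN
  have hdet2 : M.det = f ^ S.card * N.det := by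
    refine det_factor f N S M ?_ ?_
    · intro p q hq
      rw [hmemS] at hq
      rw [hN]
      simp only [dif_pos hq]
      exact (hchoice p q hq).choose_spec
    · intro p q hq
      rw [hmemS] at hq
      rw [hM, hN]
      simp only [if_neg hq, dif_neg hq]
  -- the cardinality of the modified column set
  have hcard : S.card = b - k := by
    have hSeq : S = ({i} : Finset (Fin t)) ×ˢ Finset.Ici (⟨k, hkb⟩ : Fin b) := by
      ext q
      simp only [hS, hP, Finset.mem_filter, Finset.mem_univ, true_and,
        Finset.mem_product, Finset.mem_singleton, Finset.mem_Ici, Fin.le_def]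
    rw [hSeq, Finset.card_product, Finset.card_singleton, Fin.card_Ici, one_mul]
  exact ⟨N.det, by rw [← hdet1, hdet2, hcard]⟩

theorem binom_det_divisibility_differences (a b t : ℕ) (ha : 1 ≤ a) (hb : 1 ≤ b) (ht : 1 ≤ t)
    (i j : Fin t) (hij : i < j) (k : ℕ) (hk : k ≤ b - 1) :
    ((MvPolynomial.X i - MvPolynomial.X j - (k : MvPolynomial (Fin t) ℚ)) ^ (b - k) ∣
        (binomMatrix a b t).det) ∧
      (MvPolynomial.X i - MvPolynomial.X j + (k : MvPolynomial (Fin t) ℚ)) ^ (b - k) ∣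
        (binomMatrix a b t).det := by
  have hkb : k < b := by omega
  constructor
  · exact key_dvd a b t i j hij.ne k hkb
  · have h2 := key_dvd a b t j i hij.ne' k hkb
    have heq : (MvPolynomial.X i - MvPolynomial.X j + (k : MvPolynomial (Fin t) ℚ))
        = -(MvPolynomial.X j - MvPolynomial.X i - (k : MvPolynomial (Fin t) ℚ)) := by ring
    rw [heq, neg_pow]
    have hu : IsUnit ((-1 : MvPolynomial (Fin t) ℚ) ^ (b - k)) := (isUnit_one.neg).pow _
    exact hu.mul_left_dvd.mpr h2
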